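/- Let {𝖾_n}_{n≥0} be an orthonormal basis of H with J𝖾_n = (-1)^n𝖾_n, let {α_k} be strictly increasing nonnegative reals tending to ∞, T the associated contraction (T𝖾_{2k} = tanh α_k 𝖾_{2k+1}, T𝖾_{2k+1} = tanh α_k 𝖾_{2k}), H_± the closed spans of even/odd basis vectors, 𝔏_± = (I+T)H_±, χ = Σ_k χ_k 𝖾_{2k+1} with {χ_k} ∈ ℓ², all χ_k ≠ 0, M_- = {g ∈ H_- : ⟨g,χ⟩ = 0}, and 𝔏_-^0 = (I+T)M_-. Then 𝔏_+ + 𝔏_-^0 is dense in H if and only if {χ_n cosh²α_n} ∉ ℓ²(ℕ). -/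

import Mathlib

open scoped ComplexInnerProductSpace
open Filter

noncomputable section

variable {H : Type*} [NormedAddCommGroup H] [InnerProductSpace ℂ H] [CompleteSpace H]

/-- `{e_n}` is an orthonormal basis of `H`. -/
def IsONB (e : ℕ → H) : Prop :=
  Orthonormal ℂ e ∧ Dense ((Submodule.span ℂ (Set.range e) : Submodule ℂ H) : Set H)

lemma memlp_two_iff' (f : ℕ → ℂ) : Memℓp f 2 ↔ Summable fun i => ‖f i‖ ^ 2 := by
  rw [memℓp_gen_iff (by norm_num : (0:ℝ) < (2:ENNReal).toReal)]
  have h2 : (2:ENNReal).toReal = (2:ℝ) := by norm_num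
  rw [h2]
  constructor <;> intro h <;>
    · convert h using 2 with i
      rw [← Real.rpow_natCast ‖f i‖ 2]
      norm_num

lemma tanh_cosh_identity' (x : ℝ) :
    ((1:ℂ) - (Real.tanh x : ℂ)^2) * ((Real.cosh x : ℂ))^2 = 1 := by
  have hc : Real.cosh x ≠ 0 := (Real.cosh_pos x).ne'
  have h2 : Real.tanh x ^2 * Real.cosh x ^2 = Real.sinh x ^2 := by
    rw [Real.tanh_eq_sinh_div_cosh]; field_simp
  have h : ((1:ℝ) - Real.tanh x ^2) * (Real.cosh x)^2 = 1 := by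
    nlinarith [Real.cosh_sq_sub_sinh_sq x]
  exact_mod_cast h

lemma abs_tanh_le_one' (x : ℝ) : |Real.tanh x| ≤ 1 := by
  rw [Real.tanh_eq_sinh_div_cosh, abs_div, abs_of_pos (Real.cosh_pos x),
    div_le_one (Real.cosh_pos x)]
  nlinarith [Real.cosh_sq_sub_sinh_sq x, sq_abs (Real.sinh x), abs_nonneg (Real.sinh x),
    Real.cosh_pos x]

lemma summable_smul_of_sq' (v : ℕ → H) (hv : Orthonormal ℂ v) (f : ℕ → ℂ)
    (hf : Summable fun i => ‖f i‖ ^ 2) : Summable fun i => f i • v i := by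
  have := (hv.orthogonalFamily.summable_iff_norm_sq_summable f).2 (by simpa using hf)
  simpa [LinearIsometry.toSpanSingleton] using this

omit [CompleteSpace H] in
lemma inner_tsum_smul' (v : ℕ → H) (f : ℕ → ℂ)
    (hf : Summable fun k => f k • v k) (x : H) :
    ⟪x, ∑' k, f k • v k⟫ = ∑' k, f k * ⟪x, v k⟫ := by
  have := (innerSL ℂ x).map_tsum hf
  simpa [inner_smul_right, mul_comm] using this

/-- With `T` the blockwise contraction built from `tanh α_k`, `H_±` the closed spans of the
even/odd basis vectors, `𝔏_+ = (I+T)H_+`, `χ = Σ_k χ_k ee_{2k+1}` with `{χ_k} ∈ ℓ²` and all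
`χ_k ≠ 0`, `M_- = {g ∈ H_- : ⟨χ, g⟩ = 0}` and `𝔏_-⁰ = (I+T)M_-`: the sum `𝔏_+ + 𝔏_-⁰` is dense
in `H` if and only if `{χ_n cosh²α_n} ∉ ℓ²(ℕ)`. -/
theorem dense_sum_iff_not_memlp
    (ee : ℕ → H) (hee : IsONB ee)
    (α : ℕ → ℝ) (hα0 : 0 ≤ α 0) (hmono : StrictMono α) (htop : Tendsto α atTop atTop)
    (T : H →L[ℂ] H)
    (hTe : ∀ k : ℕ, T (ee (2 * k)) = (Real.tanh (α k) : ℝ) • ee (2 * k + 1) ∧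
      T (ee (2 * k + 1)) = (Real.tanh (α k) : ℝ) • ee (2 * k))
    (χ : ℕ → ℂ) (hχ2 : Memℓp χ 2) (hχne : ∀ k, χ k ≠ 0) :
    Dense ((↑(
        Submodule.map (1 + T : H →L[ℂ] H).toLinearMap
          ((Submodule.span ℂ (Set.range fun k : ℕ => ee (2 * k))).topologicalClosure)
        ⊔
        Submodule.map (1 + T : H →L[ℂ] H).toLinearMap
          ((Submodule.span ℂ (Set.range fun k : ℕ => ee (2 * k + 1))).topologicalClosure
            ⊓ LinearMap.ker (innerSL ℂ (∑' k : ℕ, χ k • ee (2 * k + 1))).toLinearMap)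
        : Submodule ℂ H) : Set H))
    ↔ ¬ Memℓp (fun n => χ n * ((Real.cosh (α n) ^ 2 : ℝ) : ℂ)) 2 := by
  obtain ⟨hon, hdense⟩ := hee
  have hiee : ∀ m n : ℕ, ⟪ee m, ee n⟫ = if m = n then (1:ℂ) else 0 :=
    orthonormal_iff_ite.mp hon
  have hsm : ∀ (r : ℝ) (x : H), (r : ℝ) • x = (r : ℂ) • x := by
    intro r x
    rw [← algebraMap_smul ℂ r x, Complex.coe_algebraMap]
  have hApe : ∀ k, (1 + T : H →L[ℂ] H) (ee (2*k)) =
      ee (2*k) + ((Real.tanh (α k) : ℂ)) • ee (2*k+1) := by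
    intro k
    simp [ContinuousLinearMap.add_apply, ContinuousLinearMap.one_apply, (hTe k).1, hsm]
  have hApo : ∀ k, (1 + T : H →L[ℂ] H) (ee (2*k+1)) =
      ee (2*k+1) + ((Real.tanh (α k) : ℂ)) • ee (2*k) := by
    intro k
    simp [ContinuousLinearMap.add_apply, ContinuousLinearMap.one_apply, (hTe k).2, hsm]
  have hoo : Orthonormal ℂ (fun k : ℕ => ee (2*k+1)) :=
    hon.comp (fun k => 2*k+1) (fun a b hab => by dsimp only at hab; omega)
  have hoe : Orthonormal ℂ (fun k : ℕ => ee (2*k)) :=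
    hon.comp (fun k => 2*k) (fun a b hab => by dsimp only at hab; omega)
  have hχsq : Summable fun k => ‖χ k‖ ^ 2 := (memlp_two_iff' χ).1 hχ2
  have hχsum : Summable fun k => χ k • ee (2*k+1) :=
    summable_smul_of_sq' (fun k => ee (2*k+1)) hoo χ hχsq
  set χv : H := ∑' k : ℕ, χ k • ee (2 * k + 1) with hχv
  have hinner_oo_χv : ∀ j, ⟪ee (2*j+1), χv⟫ = χ j := by
    intro j
    rw [hχv, inner_tsum_smul' _ χ hχsum, tsum_eq_single j]
    · rw [hiee]; simp
    · intro k hk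
      rw [hiee]
      have hne : ¬ (2*j+1 = 2*k+1) := by omega
      rw [if_neg hne, mul_zero]
  have hSLoo : ∀ j, innerSL ℂ χv (ee (2*j+1)) = (starRingEnd ℂ) (χ j) := by
    intro j
    simp only [innerSL_apply_apply]
    rw [← inner_conj_symm, hinner_oo_χv]
  -- reduce density to triviality of the orthogonal complement
  rw [Submodule.dense_iff_topologicalClosure_eq_top, Submodule.topologicalClosure_eq_top_iff]
  set K1 := (Submodule.span ℂ (Set.range fun k : ℕ => ee (2 * k))).topologicalClosure with hK1
  set K2o := (Submodule.span ℂ (Set.range fun k : ℕ => ee (2 * k + 1))).topologicalClosure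
    with hK2o
  set A : H →L[ℂ] H := 1 + T with hA
  set S : Submodule ℂ H :=
    Submodule.map A.toLinearMap K1 ⊔ Submodule.map A.toLinearMap (K2o ⊓ LinearMap.ker (innerSL ℂ χv).toLinearMap) with hS
  -- a sufficient condition for membership in Sᗮ
  have mem_orth_of : ∀ h : H, (∀ k, ⟪h, A (ee (2*k))⟫ = 0) →
      (∀ j, ⟪h, A (ee (2*j+1))⟫ = (starRingEnd ℂ) (χ j)) → h ∈ Sᗮ := by
    intro h h1 h2
    set ψ : H →L[ℂ] ℂ := (innerSL ℂ h).comp A with hψ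
    have claim1 : K1 ≤ LinearMap.ker (ψ : H →L[ℂ] ℂ).toLinearMap := by
      apply Submodule.topologicalClosure_minimal
      · rw [Submodule.span_le]
        rintro x ⟨k, rfl⟩
        simp only [SetLike.mem_coe, LinearMap.mem_ker]
        exact h1 k
      · exact ContinuousLinearMap.isClosed_ker _
    have claim2 : K2o ≤ LinearMap.ker ((ψ - innerSL ℂ χv : H →L[ℂ] ℂ)).toLinearMap := by
      apply Submodule.topologicalClosure_minimal
      · rw [Submodule.span_le]
        rintro x ⟨j, rfl⟩
        simp only [SetLike.mem_coe, LinearMap.mem_ker, ContinuousLinearMap.coe_coe, ContinuousLinearMap.coe_sub',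
          Pi.sub_apply]
        rw [show ψ (ee (2*j+1)) = ⟪h, A (ee (2*j+1))⟫ from rfl, h2 j, hSLoo j, sub_self]
      · exact ContinuousLinearMap.isClosed_ker _
    rw [Submodule.mem_orthogonal]
    intro u hu
    rw [hS, Submodule.mem_sup] at hu
    obtain ⟨y, hy, z, hz, rfl⟩ := hu
    obtain ⟨x, hx, rfl⟩ := hy
    obtain ⟨g, hg, rfl⟩ := hz
    have hψx : ψ x = 0 := claim1 hx
    have hψg : ψ g = 0 := by
      obtain ⟨hg1, hg2⟩ := hg
      have hg3 := claim2 hg1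
      have hg2' : innerSL ℂ χv g = 0 := hg2
      have h' : ψ g - innerSL ℂ χv g = 0 := by simpa using hg3
      rw [hg2', sub_zero] at h'
      exact h'
    have e1 : ⟪A x, h⟫ = 0 := by
      rw [← inner_conj_symm, show ⟪h, A x⟫ = ψ x from rfl, hψx, map_zero]
    have e2 : ⟪A g, h⟫ = 0 := by
      rw [← inner_conj_symm, show ⟪h, A g⟫ = ψ g from rfl, hψg, map_zero]
    rw [inner_add_left, ContinuousLinearMap.coe_coe, e1, e2, add_zero]
  constructor
  · -- dense ⇒ not ℓ²
    intro hbot hmem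
    set f1 : ℕ → ℂ := fun j => χ j * ((Real.cosh (α j) ^ 2 : ℝ) : ℂ) with hf1
    set f2 : ℕ → ℂ := fun j => -((Real.tanh (α j) : ℂ)) * f1 j with hf2
    have hsq1 : Summable fun j => ‖f1 j‖ ^ 2 := (memlp_two_iff' _).1 hmem
    have hsq2 : Summable fun j => ‖f2 j‖ ^ 2 := by
      apply Summable.of_nonneg_of_le (fun j => by positivity) _ hsq1
      intro j
      rw [hf2]
      have h1 : ‖-((Real.tanh (α j) : ℂ)) * f1 j‖ = |Real.tanh (α j)| * ‖f1 j‖ := by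
        rw [norm_mul, norm_neg, Complex.norm_real, Real.norm_eq_abs]
      rw [h1, mul_pow]
      have h2 : |Real.tanh (α j)| ^ 2 ≤ 1 := by
        have := abs_tanh_le_one' (α j)
        nlinarith [abs_nonneg (Real.tanh (α j))]
      nlinarith [norm_nonneg (f1 j), sq_nonneg (‖f1 j‖)]
    have hsum1 : Summable fun j => f1 j • ee (2*j+1) :=
      summable_smul_of_sq' (fun k => ee (2*k+1)) hoo f1 hsq1
    have hsum2 : Summable fun j => f2 j • ee (2*j) :=
      summable_smul_of_sq' (fun k => ee (2*k)) hoe f2 hsq2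
    set h : H := (∑' j, f1 j • ee (2*j+1)) + (∑' j, f2 j • ee (2*j)) with hh
    have hbo : ∀ j, ⟪ee (2*j+1), h⟫ = f1 j := by
      intro j
      rw [hh, inner_add_right, inner_tsum_smul' _ f1 hsum1, inner_tsum_smul' _ f2 hsum2]
      have hz : ∀ k, f2 k * ⟪ee (2*j+1), ee (2*k)⟫ = 0 := by
        intro k
        rw [hiee]
        have hne : ¬ (2*j+1 = 2*k) := by omega
        simp [hne]
      rw [tsum_congr hz, tsum_zero, add_zero, tsum_eq_single j]
      · rw [hiee]; simp
      · intro k hk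
        rw [hiee]
        have hne : ¬ (2*j+1 = 2*k+1) := by omega
        rw [if_neg hne, mul_zero]
    have hbe : ∀ j, ⟪ee (2*j), h⟫ = f2 j := by
      intro j
      rw [hh, inner_add_right, inner_tsum_smul' _ f1 hsum1, inner_tsum_smul' _ f2 hsum2]
      have hz : ∀ k, f1 k * ⟪ee (2*j), ee (2*k+1)⟫ = 0 := by
        intro k
        rw [hiee]
        have hne : ¬ (2*j = 2*k+1) := by omega
        simp [hne]
      rw [tsum_congr hz, tsum_zero, zero_add, tsum_eq_single j]
      · rw [hiee]; simp
      · intro k hk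
        rw [hiee]
        have hne : ¬ (2*j = 2*k) := by omega
        simp [hne]
    have hmemS : h ∈ Sᗮ := by
      apply mem_orth_of
      · intro k
        rw [hA, hApe, inner_add_right, inner_smul_right,
          ← inner_conj_symm h (ee (2*k)), hbe,
          ← inner_conj_symm h (ee (2*k+1)), hbo, hf2]
        simp only [map_mul, map_neg, Complex.conj_ofReal]
        ring
      · intro j
        rw [hA, hApo, inner_add_right, inner_smul_right,
          ← inner_conj_symm h (ee (2*j+1)), hbo,
          ← inner_conj_symm h (ee (2*j)), hbe, hf2, hf1]
        simp only [map_mul, map_neg, Complex.conj_ofReal]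
        have key := tanh_cosh_identity' (α j)
        have expand : (starRingEnd ℂ) (χ j) * ((Real.cosh (α j) ^ 2 : ℝ) : ℂ) +
            (Real.tanh (α j) : ℂ) * (-(Real.tanh (α j) : ℂ) *
              ((starRingEnd ℂ) (χ j) * ((Real.cosh (α j) ^ 2 : ℝ) : ℂ))) =
            (starRingEnd ℂ) (χ j) *
              (((1:ℂ) - (Real.tanh (α j) : ℂ)^2) * ((Real.cosh (α j) : ℂ))^2) := by
          push_cast
          ring
        rw [expand, key, mul_one]
    have hne : h ≠ 0 := by
      intro h0
      have hb0 := hbo 0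
      rw [h0, inner_zero_right] at hb0
      have hc20 : ((Real.cosh (α 0) ^ 2 : ℝ) : ℂ) ≠ 0 := by
        simp only [Complex.ofReal_ne_zero]
        positivity
      rcases mul_eq_zero.mp hb0.symm with h' | h'
      · exact hχne 0 h'
      · exact hc20 h'
    rw [hbot] at hmemS
    exact hne ((Submodule.mem_bot ℂ).mp hmemS)
  · -- not ℓ² ⇒ orthogonal complement trivial
    intro hnot
    rw [Submodule.eq_bot_iff]
    intro h hh
    rw [Submodule.mem_orthogonal] at hh
    set a : ℕ → ℂ := fun k => ⟪ee (2*k), h⟫ with ha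
    set b : ℕ → ℂ := fun k => ⟪ee (2*k+1), h⟫ with hb
    have hmemK1 : ∀ k, ee (2*k) ∈ K1 := fun k =>
      Submodule.le_topologicalClosure _ (Submodule.subset_span ⟨k, rfl⟩)
    have hmemK2o : ∀ k, ee (2*k+1) ∈ K2o := fun k =>
      Submodule.le_topologicalClosure _ (Submodule.subset_span ⟨k, rfl⟩)
    have e1 : ∀ k, a k + (Real.tanh (α k) : ℂ) * b k = 0 := by
      intro k
      have hu : A (ee (2*k)) ∈ S :=
        Submodule.mem_sup_left ⟨ee (2*k), hmemK1 k, rfl⟩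
      have h0 := hh _ hu
      rw [hA, hApe, inner_add_left, inner_smul_left, Complex.conj_ofReal] at h0
      exact h0
    set d : ℕ → ℂ := fun j => b j + (Real.tanh (α j) : ℂ) * a j with hd
    have e2 : ∀ j k, (χ j)⁻¹ * d j = (χ k)⁻¹ * d k := by
      intro j k
      rcases eq_or_ne j k with rfl | hjk
      · rfl
      set g : H := ((starRingEnd ℂ) (χ j))⁻¹ • ee (2*j+1) -
        ((starRingEnd ℂ) (χ k))⁻¹ • ee (2*k+1) with hg
      have hgK2o : g ∈ K2o :=
        Submodule.sub_mem _ (Submodule.smul_mem _ _ (hmemK2o j))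
          (Submodule.smul_mem _ _ (hmemK2o k))
      have hgker : g ∈ LinearMap.ker (innerSL ℂ χv).toLinearMap := by
        rw [LinearMap.mem_ker, ContinuousLinearMap.coe_coe, hg, map_sub, map_smul, map_smul, hSLoo, hSLoo,
          smul_eq_mul, smul_eq_mul, inv_mul_cancel₀, inv_mul_cancel₀, sub_self]
        · intro hc; exact hχne k (by simpa using congrArg (starRingEnd ℂ) hc)
        · intro hc; exact hχne j (by simpa using congrArg (starRingEnd ℂ) hc)
      have hu : A g ∈ S :=
        Submodule.mem_sup_right ⟨g, ⟨hgK2o, hgker⟩, rfl⟩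
      have h0 := hh _ hu
      have hAg : A g = ((starRingEnd ℂ) (χ j))⁻¹ • A (ee (2*j+1)) -
          ((starRingEnd ℂ) (χ k))⁻¹ • A (ee (2*k+1)) := by
        rw [hg, map_sub, map_smul, map_smul]
      rw [hAg, inner_sub_left, inner_smul_left, inner_smul_left] at h0
      have hdj : ⟪A (ee (2*j+1)), h⟫ = d j := by
        rw [hA, hApo, inner_add_left, inner_smul_left, Complex.conj_ofReal]
      have hdk : ⟪A (ee (2*k+1)), h⟫ = d k := by
        rw [hA, hApo, inner_add_left, inner_smul_left, Complex.conj_ofReal]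
      have hcj : (starRingEnd ℂ) (((starRingEnd ℂ) (χ j))⁻¹) = (χ j)⁻¹ := by
        rw [map_inv₀]; simp
      have hck : (starRingEnd ℂ) (((starRingEnd ℂ) (χ k))⁻¹) = (χ k)⁻¹ := by
        rw [map_inv₀]; simp
      rw [hdj, hdk, hcj, hck] at h0
      exact sub_eq_zero.mp h0
    set c : ℂ := (χ 0)⁻¹ * d 0 with hc
    have hdc : ∀ j, d j = c * χ j := by
      intro j
      have h1 := e2 j 0
      rw [← hc] at h1
      have h2 : χ j * ((χ j)⁻¹ * d j) = χ j * c := by rw [h1]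
      rw [← mul_assoc, mul_inv_cancel₀ (hχne j), one_mul] at h2
      rw [h2, mul_comm]
    have hbj : ∀ j, b j = c * (χ j * ((Real.cosh (α j) ^ 2 : ℝ) : ℂ)) := by
      intro j
      have ha' : a j = -((Real.tanh (α j) : ℂ)) * b j := by
        have := e1 j
        linear_combination this
      have hd' : b j * ((1:ℂ) - (Real.tanh (α j) : ℂ)^2) = c * χ j := by
        have := hdc j
        rw [hd] at this
        simp only at this
        rw [ha'] at this
        linear_combination this
      have key := tanh_cosh_identity' (α j)
      calc b j = b j * (((1:ℂ) - (Real.tanh (α j) : ℂ)^2) * ((Real.cosh (α j) : ℂ))^2) := by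
            rw [key, mul_one]
        _ = (b j * ((1:ℂ) - (Real.tanh (α j) : ℂ)^2)) * ((Real.cosh (α j) : ℂ))^2 := by ring
        _ = (c * χ j) * ((Real.cosh (α j) : ℂ))^2 := by rw [hd']
        _ = c * (χ j * ((Real.cosh (α j) ^ 2 : ℝ) : ℂ)) := by push_cast; ring
    have hsummb : Summable fun j => ‖b j‖ ^ 2 := by
      have := Orthonormal.inner_products_summable h hoo
      simpa [hb] using this
    have hc0 : c = 0 := by
      by_contra hcne
      apply hnot
      rw [memlp_two_iff']
      have hcn : ‖c‖ ^ 2 ≠ 0 := by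
        have : ‖c‖ ≠ 0 := norm_ne_zero_iff.mpr hcne
        positivity
      apply (summable_mul_left_iff hcn).mp
      apply hsummb.congr
      intro j
      rw [hbj j, norm_mul, mul_pow]
    have hb0 : ∀ j, b j = 0 := by
      intro j
      rw [hbj j, hc0, zero_mul]
    have ha0 : ∀ j, a j = 0 := by
      intro j
      have := e1 j
      rw [hb0 j, mul_zero, add_zero] at this
      exact this
    have hall : ∀ n, ⟪ee n, h⟫ = 0 := by
      intro n
      rcases Nat.even_or_odd n with ⟨k, rfl⟩ | ⟨k, rfl⟩
      · have := ha0 k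
        rw [ha] at this
        simpa [two_mul] using this
      · have := hb0 k
        rw [hb] at this
        exact this
      -- note: Odd k gives n = 2*k+1 definitionally
    -- conclude h = 0 using density of the span of the basis
    have hspan : Submodule.span ℂ (Set.range ee) ≤ (ℂ ∙ h)ᗮ := by
      rw [Submodule.span_le]
      rintro x ⟨n, rfl⟩
      rw [SetLike.mem_coe, Submodule.mem_orthogonal_singleton_iff_inner_left]
      exact hall n
    have hclos : (Submodule.span ℂ (Set.range ee)).topologicalClosure ≤ (ℂ ∙ h)ᗮ :=
      Submodule.topologicalClosure_minimal _ hspan (Submodule.isClosed_orthogonal _)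
    have htotal : (Submodule.span ℂ (Set.range ee)).topologicalClosure = ⊤ :=
      Submodule.dense_iff_topologicalClosure_eq_top.mp hdense
    have hmem : h ∈ (ℂ ∙ h)ᗮ := hclos (htotal ▸ Submodule.mem_top)
    rw [Submodule.mem_orthogonal_singleton_iff_inner_left, inner_self_eq_zero] at hmem
    exact hmem
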